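/- For all ξ, η ∈ ℋ with ξ ≠ (0,0) and η ≠ (0,0), the inversion satisfies the distance distortion identity ‖R(ξ)⁻¹ · R(η)‖ · ‖ξ‖ · ‖η‖ = ‖ξ⁻¹ · η‖, where ξ⁻¹ denotes the group inverse in ℋ. -/

import Mathlib

open scoped BigOperators
open Matrix

noncomputable section

namespace OC

/-- Octonions, identified with ℝ⁸. -/
abbrev Octo : Type := Fin 8 → ℝ

/-- The seven positively-oriented triples Ω. -/
def OmegaT : List (Fin 8 × Fin 8 × Fin 8) :=
  [(1,2,3),(2,4,6),(4,3,5),(3,6,7),(6,5,1),(5,7,2),(7,1,4)]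

/-- The six permutations of a triple, with their signs. -/
def signedPerms3 (t : Fin 8 × Fin 8 × Fin 8) : List (ℝ × (Fin 8 × Fin 8 × Fin 8)) :=
  [(1,(t.1,t.2.1,t.2.2)), (1,(t.2.1,t.2.2,t.1)), (1,(t.2.2,t.1,t.2.1)),
   (-1,(t.2.1,t.1,t.2.2)), (-1,(t.1,t.2.2,t.2.1)), (-1,(t.2.2,t.2.1,t.1))]

/-- The totally antisymmetric symbol ε with ε(α,β,γ) = 1 on Ω and vanishing on triples
that are not permutations of a triple of Ω. -/
def eps (a b c : Fin 8) : ℝ :=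
  (((OmegaT.map signedPerms3).flatten).map (fun p => if p.2 = (a,b,c) then p.1 else 0)).sum

/-- Coefficient of `e d` in the product `e a * e b`: `e 0` is a two-sided unit and
`e α * e β = -δ_{αβ} e 0 + ∑ γ, ε(α,β,γ) e γ` for imaginary indices. -/
def mulCoef (a b d : Fin 8) : ℝ :=
  if a = 0 then (if d = b then 1 else 0)
  else if b = 0 then (if d = a then 1 else 0)
  else (if a = b ∧ d = 0 then -1 else 0) + eps a b d

/-- Octonion multiplication on ℝ⁸. -/
def omul (x y : Octo) : Octo := fun d => ∑ a, ∑ b, x a * y b * mulCoef a b d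

/-- The standard basis octonions e₀,…,e₇. -/
def e (a : Fin 8) : Octo := fun d => if d = a then 1 else 0

/-- Real part. -/
def reO (x : Octo) : ℝ := x 0

/-- Imaginary part. -/
def imO (x : Octo) : Octo := fun d => if d = 0 then 0 else x d

/-- Octonion conjugation. -/
def conjO (x : Octo) : Octo := fun d => if d = 0 then x 0 else -x d

/-- Squared Euclidean norm |x|². -/
def normSq (x : Octo) : ℝ := ∑ a, (x a)^2

/-- Inverse of a nonzero octonion, q⁻¹ = q̄ / |q|². -/
def oinv (q : Octo) : Octo := (normSq q)⁻¹ • conjO q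

/-- The seven quadruples Λ. -/
def LambdaT : List (Fin 8 × Fin 8 × Fin 8 × Fin 8) :=
  [(5,4,6,7),(7,3,5,1),(1,6,7,2),(2,5,1,4),(4,7,2,3),(3,1,4,6),(6,2,5,3)]

/-- The 24 permutations of a quadruple, with their signs. -/
def signedPerms4 (t : Fin 8 × Fin 8 × Fin 8 × Fin 8) :
    List (ℝ × (Fin 8 × Fin 8 × Fin 8 × Fin 8)) :=
  let a := t.1; let b := t.2.1; let c := t.2.2.1; let d := t.2.2.2
  [ (1,(a,b,c,d)), (-1,(a,b,d,c)), (-1,(a,c,b,d)), (1,(a,c,d,b)), (1,(a,d,b,c)), (-1,(a,d,c,b)),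
    (-1,(b,a,c,d)), (1,(b,a,d,c)), (1,(b,c,a,d)), (-1,(b,c,d,a)), (-1,(b,d,a,c)), (1,(b,d,c,a)),
    (1,(c,a,b,d)), (-1,(c,a,d,b)), (-1,(c,b,a,d)), (1,(c,b,d,a)), (1,(c,d,a,b)), (-1,(c,d,b,a)),
    (-1,(d,a,b,c)), (1,(d,a,c,b)), (1,(d,b,a,c)), (-1,(d,b,c,a)), (-1,(d,c,a,b)), (1,(d,c,b,a)) ]

/-- The totally antisymmetric symbol ε₄ with value 1 on Λ and vanishing on quadruples
that are not permutations of a quadruple of Λ. -/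
def eps4 (a b c d : Fin 8) : ℝ :=
  (((LambdaT.map signedPerms4).flatten).map (fun p => if p.2 = (a,b,c,d) then p.1 else 0)).sum

/-- Matrix of left multiplication by `e a`: `(Imat a) d c` is the coefficient of `e d` in
`e a * e c`. -/
def Imat (a : Fin 8) : Matrix (Fin 8) (Fin 8) ℝ := Matrix.of fun d c => mulCoef a c d

/-- Octonionic Heisenberg group multiplication on 𝕆 × Im 𝕆 (realized inside 𝕆 × 𝕆):
`(x,t)·(y,s) = (x+y, t+s+2 Im(x ȳ))`. -/
def hmul (p q : Octo × Octo) : Octo × Octo :=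
  (p.1 + q.1, p.2 + q.2 + (2:ℝ) • imO (omul p.1 (conjO q.1)))

/-- Group inverse in the octonionic Heisenberg group. -/
def hinv (p : Octo × Octo) : Octo × Octo := (-p.1, -p.2)

/-- Homogeneous norm ‖(x,t)‖ = (|x|⁴+|t|²)^{1/4}. -/
def hnorm (p : Octo × Octo) : ℝ := ((normSq p.1)^2 + normSq p.2) ^ ((1:ℝ)/4)

/-- The inversion R(x,t) = (−((|x|²e₀ − t)⁻¹)x, −t/(|x|⁴+|t|²)). -/
def Rmap (p : Octo × Octo) : Octo × Octo :=
  (-(omul (oinv (normSq p.1 • e 0 - p.2)) p.1),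
   -(((normSq p.1)^2 + normSq p.2)⁻¹ • p.2))

/-- E^β = I_β for β ∈ {1,…,7}, indexed here by `Fin 7` via `β ↦ β+1`. -/
def E7 (β : Fin 7) : Matrix (Fin 8) (Fin 8) ℝ := Imat β.succ

/-- Octonionic Heisenberg group multiplication in ℝ⁸ × ℝ⁷ coordinates. -/
def hmulC (p q : (Fin 8 → ℝ) × (Fin 7 → ℝ)) : (Fin 8 → ℝ) × (Fin 7 → ℝ) :=
  (p.1 + q.1, fun β => p.2 β + q.2 β + 2 * ∑ a, ∑ b, E7 β a b * p.1 a * q.1 b)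

/-- The left-invariant horizontal vector fields
`X_a = ∂/∂x_a + 2 ∑_{β,b} (E^β)_{ba} x_b ∂/∂t_β`. -/
def Xop (a : Fin 8) (f : ((Fin 8 → ℝ) × (Fin 7 → ℝ)) → ℝ)
    (p : (Fin 8 → ℝ) × (Fin 7 → ℝ)) : ℝ :=
  fderiv ℝ f p ((Pi.single a 1 : Fin 8 → ℝ), (0 : Fin 7 → ℝ))
    + 2 * ∑ β : Fin 7, ∑ b : Fin 8,
        E7 β b a * p.1 b * fderiv ℝ f p ((0 : Fin 8 → ℝ), (Pi.single β 1 : Fin 7 → ℝ))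

/-- ρ(x,t) = |x|⁴ + |t|². -/
def rho (p : (Fin 8 → ℝ) × (Fin 7 → ℝ)) : ℝ :=
  (∑ a, (p.1 a)^2)^2 + ∑ β, (p.2 β)^2

set_option maxHeartbeats 4000000 in
lemma omul0 (x y : Octo) : omul x y 0 = x 0 * y 0 - x 1 * y 1 - x 2 * y 2 - x 3 * y 3 - x 4 * y 4 - x 5 * y 5 - x 6 * y 6 - x 7 * y 7 := by
  show (∑ a, ∑ b, x a * y b * mulCoef a b 0) = _
  simp (config := { decide := true }) only [Fin.sum_univ_eight, mulCoef, eps, OmegaT,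
    signedPerms3, List.map, List.flatten, List.sum_cons, List.sum_nil, List.append_nil,
    List.append_eq, List.cons_append, List.nil_append, if_true, if_false]
  ring

set_option maxHeartbeats 4000000 in
lemma omul1 (x y : Octo) : omul x y 1 = x 0 * y 1 + x 1 * y 0 + x 2 * y 3 - x 3 * y 2 + x 4 * y 7 - x 5 * y 6 + x 6 * y 5 - x 7 * y 4 := by
  show (∑ a, ∑ b, x a * y b * mulCoef a b 1) = _
  simp (config := { decide := true }) only [Fin.sum_univ_eight, mulCoef, eps, OmegaT,
    signedPerms3, List.map, List.flatten, List.sum_cons, List.sum_nil, List.append_nil,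
    List.append_eq, List.cons_append, List.nil_append, if_true, if_false]
  ring

set_option maxHeartbeats 4000000 in
lemma omul2 (x y : Octo) : omul x y 2 = x 0 * y 2 - x 1 * y 3 + x 2 * y 0 + x 3 * y 1 + x 4 * y 6 + x 5 * y 7 - x 6 * y 4 - x 7 * y 5 := by
  show (∑ a, ∑ b, x a * y b * mulCoef a b 2) = _
  simp (config := { decide := true }) only [Fin.sum_univ_eight, mulCoef, eps, OmegaT,
    signedPerms3, List.map, List.flatten, List.sum_cons, List.sum_nil, List.append_nil,
    List.append_eq, List.cons_append, List.nil_append, if_true, if_false]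
  ring

set_option maxHeartbeats 4000000 in
lemma omul3 (x y : Octo) : omul x y 3 = x 0 * y 3 + x 1 * y 2 - x 2 * y 1 + x 3 * y 0 - x 4 * y 5 + x 5 * y 4 + x 6 * y 7 - x 7 * y 6 := by
  show (∑ a, ∑ b, x a * y b * mulCoef a b 3) = _
  simp (config := { decide := true }) only [Fin.sum_univ_eight, mulCoef, eps, OmegaT,
    signedPerms3, List.map, List.flatten, List.sum_cons, List.sum_nil, List.append_nil,
    List.append_eq, List.cons_append, List.nil_append, if_true, if_false]
  ring

set_option maxHeartbeats 4000000 in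
lemma omul4 (x y : Octo) : omul x y 4 = x 0 * y 4 - x 1 * y 7 - x 2 * y 6 + x 3 * y 5 + x 4 * y 0 - x 5 * y 3 + x 6 * y 2 + x 7 * y 1 := by
  show (∑ a, ∑ b, x a * y b * mulCoef a b 4) = _
  simp (config := { decide := true }) only [Fin.sum_univ_eight, mulCoef, eps, OmegaT,
    signedPerms3, List.map, List.flatten, List.sum_cons, List.sum_nil, List.append_nil,
    List.append_eq, List.cons_append, List.nil_append, if_true, if_false]
  ring

set_option maxHeartbeats 4000000 in
lemma omul5 (x y : Octo) : omul x y 5 = x 0 * y 5 + x 1 * y 6 - x 2 * y 7 - x 3 * y 4 + x 4 * y 3 + x 5 * y 0 - x 6 * y 1 + x 7 * y 2 := by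
  show (∑ a, ∑ b, x a * y b * mulCoef a b 5) = _
  simp (config := { decide := true }) only [Fin.sum_univ_eight, mulCoef, eps, OmegaT,
    signedPerms3, List.map, List.flatten, List.sum_cons, List.sum_nil, List.append_nil,
    List.append_eq, List.cons_append, List.nil_append, if_true, if_false]
  ring

set_option maxHeartbeats 4000000 in
lemma omul6 (x y : Octo) : omul x y 6 = x 0 * y 6 - x 1 * y 5 + x 2 * y 4 - x 3 * y 7 - x 4 * y 2 + x 5 * y 1 + x 6 * y 0 + x 7 * y 3 := by
  show (∑ a, ∑ b, x a * y b * mulCoef a b 6) = _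
  simp (config := { decide := true }) only [Fin.sum_univ_eight, mulCoef, eps, OmegaT,
    signedPerms3, List.map, List.flatten, List.sum_cons, List.sum_nil, List.append_nil,
    List.append_eq, List.cons_append, List.nil_append, if_true, if_false]
  ring

set_option maxHeartbeats 4000000 in
lemma omul7 (x y : Octo) : omul x y 7 = x 0 * y 7 + x 1 * y 4 + x 2 * y 5 + x 3 * y 6 - x 4 * y 1 - x 5 * y 2 - x 6 * y 3 + x 7 * y 0 := by
  show (∑ a, ∑ b, x a * y b * mulCoef a b 7) = _
  simp (config := { decide := true }) only [Fin.sum_univ_eight, mulCoef, eps, OmegaT,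
    signedPerms3, List.map, List.flatten, List.sum_cons, List.sum_nil, List.append_nil,
    List.append_eq, List.cons_append, List.nil_append, if_true, if_false]
  ring

def innerO (x y : Octo) : ℝ := ∑ a, x a * y a

lemma conjO_0 (x : Octo) : conjO x 0 = x 0 := rfl
lemma conjO_1 (x : Octo) : conjO x 1 = -x 1 := rfl
lemma conjO_2 (x : Octo) : conjO x 2 = -x 2 := rfl
lemma conjO_3 (x : Octo) : conjO x 3 = -x 3 := rfl
lemma conjO_4 (x : Octo) : conjO x 4 = -x 4 := rfl
lemma conjO_5 (x : Octo) : conjO x 5 = -x 5 := rfl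
lemma conjO_6 (x : Octo) : conjO x 6 = -x 6 := rfl
lemma conjO_7 (x : Octo) : conjO x 7 = -x 7 := rfl

lemma imO_0 (x : Octo) : imO x 0 = 0 := rfl
lemma imO_1 (x : Octo) : imO x 1 = x 1 := rfl
lemma imO_2 (x : Octo) : imO x 2 = x 2 := rfl
lemma imO_3 (x : Octo) : imO x 3 = x 3 := rfl
lemma imO_4 (x : Octo) : imO x 4 = x 4 := rfl
lemma imO_5 (x : Octo) : imO x 5 = x 5 := rfl
lemma imO_6 (x : Octo) : imO x 6 = x 6 := rfl
lemma imO_7 (x : Octo) : imO x 7 = x 7 := rfl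

lemma e0_0 : e 0 0 = 1 := rfl
lemma e0_1 : e 0 1 = 0 := rfl
lemma e0_2 : e 0 2 = 0 := rfl
lemma e0_3 : e 0 3 = 0 := rfl
lemma e0_4 : e 0 4 = 0 := rfl
lemma e0_5 : e 0 5 = 0 := rfl
lemma e0_6 : e 0 6 = 0 := rfl
lemma e0_7 : e 0 7 = 0 := rfl

attribute [local simp] omul0 omul1 omul2 omul3 omul4 omul5 omul6 omul7
  conjO_0 conjO_1 conjO_2 conjO_3 conjO_4 conjO_5 conjO_6 conjO_7
  imO_0 imO_1 imO_2 imO_3 imO_4 imO_5 imO_6 imO_7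
  e0_0 e0_1 e0_2 e0_3 e0_4 e0_5 e0_6 e0_7

lemma normSq_expand (x : Octo) : normSq x =
    x 0^2 + x 1^2 + x 2^2 + x 3^2 + x 4^2 + x 5^2 + x 6^2 + x 7^2 := by
  simp [normSq, Fin.sum_univ_eight]

lemma innerO_expand (x y : Octo) : innerO x y =
    x 0 * y 0 + x 1 * y 1 + x 2 * y 2 + x 3 * y 3 + x 4 * y 4 + x 5 * y 5 + x 6 * y 6 + x 7 * y 7 := by
  simp [innerO, Fin.sum_univ_eight]

lemma innerO_self (x : Octo) : innerO x x = normSq x := by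
  simp [innerO_expand, normSq_expand]; ring

lemma conj_conj (x : Octo) : conjO (conjO x) = x := by
  funext d; fin_cases d <;> simp

lemma normSq_conj (x : Octo) : normSq (conjO x) = normSq x := by
  simp [normSq_expand]

lemma innerO_conj (x y : Octo) : innerO (conjO x) (conjO y) = innerO x y := by
  simp [innerO_expand]

lemma conj_omul (x y : Octo) : conjO (omul x y) = omul (conjO y) (conjO x) := by
  funext d; fin_cases d <;> simp <;> ring

lemma omul_smul_left (r : ℝ) (x y : Octo) : omul (r • x) y = r • omul x y := by
  funext d; fin_cases d <;> simp <;> ring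

lemma omul_smul_right (r : ℝ) (x y : Octo) : omul x (r • y) = r • omul x y := by
  funext d; fin_cases d <;> simp <;> ring

lemma omul_neg_left (x y : Octo) : omul (-x) y = -omul x y := by
  funext d; fin_cases d <;> simp <;> ring

lemma omul_neg_right (x y : Octo) : omul x (-y) = -omul x y := by
  funext d; fin_cases d <;> simp <;> ring

lemma conj_smul (r : ℝ) (x : Octo) : conjO (r • x) = r • conjO x := by
  funext d; fin_cases d <;> simp

lemma conj_neg (x : Octo) : conjO (-x) = -conjO x := by
  funext d; fin_cases d <;> simp

lemma normSq_smul (r : ℝ) (x : Octo) : normSq (r • x) = r^2 * normSq x := by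
  simp [normSq_expand]; ring

lemma normSq_neg (x : Octo) : normSq (-x) = normSq x := by
  simp [normSq_expand]

lemma lemB2 (a z : Octo) : omul a (omul (conjO a) z) = normSq a • z := by
  funext d; fin_cases d <;> simp [normSq_expand] <;> ring

lemma lemC (a u v : Octo) : innerO (omul a u) (omul a v) = normSq a * innerO u v := by
  simp [innerO_expand, normSq_expand]; ring

lemma lemE (a b c : Octo) : innerO a (omul b c) = innerO (omul a (conjO c)) b := by
  simp [innerO_expand]; ring

lemma lemE2 (a b c : Octo) : innerO a (omul b c) = innerO (omul (conjO b) a) c := by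
  simp [innerO_expand]; ring

lemma normSq_omul (x y : Octo) : normSq (omul x y) = normSq x * normSq y := by
  rw [← innerO_self, lemC, innerO_self]

lemma innerO_smul_left (r : ℝ) (x y : Octo) : innerO (r • x) y = r * innerO x y := by
  simp [innerO_expand]; ring

lemma innerO_smul_right (r : ℝ) (x y : Octo) : innerO x (r • y) = r * innerO x y := by
  simp [innerO_expand]; ring

lemma normSq_comb (u v w : Octo) :
    normSq (u + v - (2:ℝ) • w) = normSq u + normSq v + 4 * normSq w
      + 2 * innerO u v - 4 * innerO u w - 4 * innerO v w := by
  simp [normSq_expand, innerO_expand]; ring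

lemma key (a b x y : Octo) :
    normSq (normSq b • a + normSq a • conjO b
        - (2:ℝ) • omul (omul (conjO b) y) (omul (conjO x) a))
      = normSq a * normSq b
        * normSq (conjO a + b - (2:ℝ) • omul y (conjO x)) := by
  have hM : normSq (omul (omul (conjO b) y) (omul (conjO x) a))
      = normSq b * normSq y * (normSq x * normSq a) := by
    rw [normSq_omul, normSq_omul, normSq_omul, normSq_conj, normSq_conj]
  have h1 : innerO a (omul (omul (conjO b) y) (omul (conjO x) a))
      = normSq a * innerO (omul b x) y := by
    rw [lemE, conj_omul, conj_conj, lemB2, innerO_smul_left,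
        lemE2 x (conjO b) y, conj_conj]
  have h2 : innerO (conjO b) (omul (omul (conjO b) y) (omul (conjO x) a))
      = normSq b * innerO (omul (conjO a) x) y := by
    rw [lemE, conj_omul, conj_conj, lemC, normSq_conj]
  have hc : innerO a (conjO b) = innerO (conjO a) b := by
    conv_lhs => rw [← conj_conj a, innerO_conj]
  have h3 : innerO (conjO a) (omul y (conjO x)) = innerO (omul (conjO a) x) y := by
    rw [lemE, conj_conj]
  have h4 : innerO b (omul y (conjO x)) = innerO (omul b x) y := by
    rw [lemE, conj_conj]
  rw [normSq_comb, normSq_comb]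
  simp only [normSq_smul, innerO_smul_left, innerO_smul_right, normSq_conj, normSq_omul]
  rw [h1, h2, hc, h3, h4]
  ring

def Qh (p : Octo × Octo) : ℝ := (normSq p.1)^2 + normSq p.2
def nuO (p : Octo × Octo) : Octo := normSq p.1 • e 0 - p.2

lemma normSq_nonneg (x : Octo) : 0 ≤ normSq x :=
  Finset.sum_nonneg fun i _ => sq_nonneg _

lemma Qh_nonneg (p : Octo × Octo) : 0 ≤ Qh p :=
  add_nonneg (sq_nonneg _) (normSq_nonneg _)

lemma normSq_eq_zero {x : Octo} (h : normSq x = 0) : x = 0 := by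
  funext d
  have h8 : ∀ i ∈ Finset.univ, (0:ℝ) ≤ x i ^ 2 := fun i _ => sq_nonneg _
  have hd := (Finset.sum_eq_zero_iff_of_nonneg h8).1 h d (Finset.mem_univ d)
  simpa using pow_eq_zero_iff two_ne_zero |>.1 hd

lemma Qh_pos {p : Octo × Octo} (hp : p ≠ 0) : 0 < Qh p := by
  rcases (Qh_nonneg p).lt_or_eq with h | h
  · exact h
  · exfalso
    apply hp
    rw [Qh] at h
    have h1 : normSq p.1 = 0 := by
      nlinarith [normSq_nonneg p.1, normSq_nonneg p.2]
    have h2 : normSq p.2 = 0 := by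
      nlinarith [normSq_nonneg p.1, normSq_nonneg p.2]
    exact Prod.ext_iff.2 ⟨normSq_eq_zero h1, normSq_eq_zero h2⟩

lemma normSq_nu {p : Octo × Octo} (hp : p.2 0 = 0) : normSq (nuO p) = Qh p := by
  simp [nuO, Qh, normSq_expand, Pi.sub_apply, Pi.smul_apply, smul_eq_mul, hp]
  ring

lemma conj_nu {p : Octo × Octo} (hp : p.2 0 = 0) :
    conjO (nuO p) = normSq p.1 • e 0 + p.2 := by
  funext d
  fin_cases d <;> simp [nuO, hp]

set_option maxHeartbeats 4000000 in
lemma Qh_hmul (p q : Octo × Octo) (hp : p.2 0 = 0) (hq : q.2 0 = 0) :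
    Qh (hmul (hinv p) q)
      = normSq (conjO (nuO p) + nuO q - (2:ℝ) • omul q.1 (conjO p.1)) := by
  simp only [Qh, hmul, hinv, nuO]
  simp [normSq_expand, hp, hq]
  ring

lemma R2_eq (p : Octo × Octo) : (Rmap p).2 = -((Qh p)⁻¹ • p.2) := rfl

lemma R2_zero {p : Octo × Octo} (hp : p.2 0 = 0) : (Rmap p).2 0 = 0 := by
  rw [R2_eq]
  simp [hp]

lemma R1 (p : Octo × Octo) (hp : p.2 0 = 0) :
    (Rmap p).1 = -((Qh p)⁻¹ • omul (conjO (nuO p)) p.1) := by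
  show -(omul (oinv (nuO p)) p.1) = _
  rw [oinv, normSq_nu hp, omul_smul_left]

lemma nuR (p : Octo × Octo) (hp : p.2 0 = 0) (h0 : Qh p ≠ 0) :
    nuO (Rmap p) = (Qh p)⁻¹ • conjO (nuO p) := by
  have h1 : normSq (Rmap p).1 = (Qh p)⁻¹ * normSq p.1 := by
    rw [R1 p hp, normSq_neg, normSq_smul, normSq_omul, normSq_conj, normSq_nu hp]
    field_simp
  show normSq (Rmap p).1 • e 0 - (Rmap p).2 = _
  rw [h1, R2_eq, conj_nu hp, sub_neg_eq_add, smul_add, smul_smul]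

lemma main_id (ξ η : Octo × Octo) (hξ : ξ ≠ 0) (hη : η ≠ 0)
    (hiξ : ξ.2 0 = 0) (hiη : η.2 0 = 0) :
    Qh (hmul (hinv (Rmap ξ)) (Rmap η)) * Qh ξ * Qh η = Qh (hmul (hinv ξ) η) := by
  have hQξ : 0 < Qh ξ := Qh_pos hξ
  have hQη : 0 < Qh η := Qh_pos hη
  have hξ0 : Qh ξ ≠ 0 := hQξ.ne'
  have hη0 : Qh η ≠ 0 := hQη.ne'
  have hWR : Qh (hmul (hinv (Rmap ξ)) (Rmap η))
      = normSq (conjO (nuO (Rmap ξ)) + nuO (Rmap η)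
          - (2:ℝ) • omul (Rmap η).1 (conjO (Rmap ξ).1)) :=
    Qh_hmul _ _ (R2_zero hiξ) (R2_zero hiη)
  have hsc : (Qh ξ * Qh η) • (conjO (nuO (Rmap ξ)) + nuO (Rmap η)
          - (2:ℝ) • omul (Rmap η).1 (conjO (Rmap ξ).1))
      = normSq (nuO η) • nuO ξ + normSq (nuO ξ) • conjO (nuO η)
        - (2:ℝ) • omul (omul (conjO (nuO η)) η.1) (omul (conjO ξ.1) (nuO ξ)) := by
    rw [R1 ξ hiξ, R1 η hiη, nuR ξ hiξ hξ0, nuR η hiη hη0]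
    rw [conj_smul, conj_conj, conj_neg, conj_smul, conj_omul, conj_conj,
        omul_neg_left, omul_neg_right, neg_neg, omul_smul_left, omul_smul_right,
        normSq_nu hiξ, normSq_nu hiη]
    match_scalars <;> field_simp <;> ring
  have hkey := key (nuO ξ) (nuO η) ξ.1 η.1
  have hW : normSq (conjO (nuO ξ) + nuO η - (2:ℝ) • omul η.1 (conjO ξ.1))
      = Qh (hmul (hinv ξ) η) := (Qh_hmul ξ η hiξ hiη).symm
  have h2 : (Qh ξ * Qh η)^2 * Qh (hmul (hinv (Rmap ξ)) (Rmap η))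
      = Qh ξ * Qh η * Qh (hmul (hinv ξ) η) := by
    rw [hWR, ← normSq_smul, hsc, hkey, normSq_nu hiξ, normSq_nu hiη, hW]
  have hne : Qh ξ * Qh η ≠ 0 := mul_ne_zero hξ0 hη0
  exact mul_left_cancel₀ hne (by linear_combination h2)


/-- distance distortion of the inversion:
‖R(ξ)⁻¹·R(η)‖ ‖ξ‖ ‖η‖ = ‖ξ⁻¹·η‖. -/
theorem Rmap_distance_distortion (ξ η : Octo × Octo)
    (hξ : ξ ≠ 0) (hη : η ≠ 0) (hiξ : ξ.2 0 = 0) (hiη : η.2 0 = 0) :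
    hnorm (hmul (hinv (Rmap ξ)) (Rmap η)) * hnorm ξ * hnorm η
      = hnorm (hmul (hinv ξ) η) := by
  have h := main_id ξ η hξ hη hiξ hiη
  show (Qh (hmul (hinv (Rmap ξ)) (Rmap η))) ^ ((1:ℝ)/4) * (Qh ξ) ^ ((1:ℝ)/4)
      * (Qh η) ^ ((1:ℝ)/4) = (Qh (hmul (hinv ξ) η)) ^ ((1:ℝ)/4)
  rw [← Real.mul_rpow (Qh_nonneg _) (Qh_nonneg _),
      ← Real.mul_rpow (mul_nonneg (Qh_nonneg _) (Qh_nonneg _)) (Qh_nonneg _), h]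

end OC
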